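/- Every representation φ = (φ_1,…,φ_n) of the equioriented A_{n+1} quiver on finite-dimensional complex vector spaces V_0,…,V_n is isomorphic to a direct sum ⊕_{0≤p≤q≤n} I_{p,q}^{⊕ s_{pq}} for some array of natural numbers s = (s_{pq})_{0≤p≤q≤n}; that is, there exists an isomorphism of representations (a morphism all of whose components are linear isomorphisms) between φ and this direct sum. -/

import Mathlib

/-- The space of representations of the equioriented `A_{n+1}` quiver on `V 0, …, V n`:
tuples of linear maps `φ i : V i →ₗ V (i+1)` for `0 ≤ i < n`. -/
abbrev HomSp (n : ℕ) (V : ℕ → Type*) [∀ i, AddCommGroup (V i)] [∀ i, Module ℂ (V i)] : Type _ :=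
  ∀ i : Fin n, V (i : ℕ) →ₗ[ℂ] V ((i : ℕ) + 1)


/-- The `k`-th vector space of the indecomposable representation `I_{p,q}` of the
equioriented `A_{n+1}` quiver: a copy of `ℂ` (as the full submodule of `ℂ`) for
`p ≤ k ≤ q`, and the zero space otherwise. -/
noncomputable def IpqSp (p q k : ℕ) : Submodule ℂ ℂ :=
  if p ≤ k ∧ k ≤ q then ⊤ else ⊥

/-- The structure map `I_{p,q}(k) → I_{p,q}(k+1)`: the identity map between consecutive
copies of `ℂ`, and the zero map otherwise. -/
noncomputable def IpqMap (p q k : ℕ) : IpqSp p q k →ₗ[ℂ] IpqSp p q (k + 1) :=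
  LinearMap.codRestrict _
    (if p ≤ k + 1 ∧ k + 1 ≤ q then (IpqSp p q k).subtype else 0)
    (by
      intro x
      split_ifs with h
      · simp [IpqSp, h]
      · simp)

section helper


lemma IpqSp_top {p q k : ℕ} (h : p ≤ k ∧ k ≤ q) : IpqSp p q k = ⊤ := by simp [IpqSp, h]

lemma IpqSp_bot {p q k : ℕ} (h : ¬(p ≤ k ∧ k ≤ q)) : IpqSp p q k = ⊥ := by simp [IpqSp, h]

lemma IpqMap_val {p q k : ℕ} (h : p ≤ k + 1 ∧ k + 1 ≤ q) (z : IpqSp p q k) :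
    (IpqMap p q k z : ℂ) = (z : ℂ) := by
  simp [IpqMap, h]

lemma IpqMap_zero' {p q k : ℕ} (h : ¬(p ≤ k + 1 ∧ k + 1 ≤ q)) (z : IpqSp p q k) :
    IpqMap p q k z = 0 := by
  apply Subtype.ext
  have h' : ¬(p ≤ k + 1 ∧ k < q) := by omega
  simp [IpqMap, h']

lemma IpqSp_bot_subsingleton {p q k : ℕ} (h : ¬(p ≤ k ∧ k ≤ q)) :
    Subsingleton (IpqSp p q k) := by
  rw [IpqSp_bot h]; infer_instance

/-- trivial linear equivalence between subsingleton modules -/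
noncomputable def trivLEquiv (M N : Type*) [AddCommGroup M] [Module ℂ M] [AddCommGroup N]
    [Module ℂ N] [Subsingleton M] [Subsingleton N] : M ≃ₗ[ℂ] N where
  toFun _ := 0
  map_add' _ _ := by simp
  map_smul' _ _ := by simp
  invFun _ := 0
  left_inv x := Subsingleton.elim _ _
  right_inv x := Subsingleton.elim _ _

end helper

section spanIpq
variable {M : Type*} [AddCommGroup M] [Module ℂ M]

noncomputable def spanIpq (p q k : ℕ) (v : M) (hv : p ≤ k ∧ k ≤ q → v ≠ 0)
    (hv0 : ¬(p ≤ k ∧ k ≤ q) → v = 0) : (Submodule.span ℂ {v}) ≃ₗ[ℂ] IpqSp p q k :=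
  if h : p ≤ k ∧ k ≤ q then
    ((LinearEquiv.toSpanNonzeroSingleton ℂ M v (hv h)).symm.trans
      Submodule.topEquiv.symm).trans (LinearEquiv.ofEq ⊤ _ (IpqSp_top h).symm)
  else
    haveI : Subsingleton (Submodule.span ℂ {v}) := by
      rw [hv0 h, Submodule.span_zero_singleton]; infer_instance
    haveI : Subsingleton (IpqSp p q k) := by rw [IpqSp_bot h]; infer_instance
    trivLEquiv _ _

lemma spanIpq_val {p q k : ℕ} {v : M} {hv : p ≤ k ∧ k ≤ q → v ≠ 0}
    {hv0 : ¬(p ≤ k ∧ k ≤ q) → v = 0} (h : p ≤ k ∧ k ≤ q) (c : ℂ)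
    (hm : c • v ∈ Submodule.span ℂ {v}) :
    ((spanIpq p q k v hv hv0 ⟨c • v, hm⟩ : IpqSp p q k) : ℂ) = c := by
  rw [spanIpq, dif_pos h]
  have h1 : (⟨c • v, hm⟩ : Submodule.span ℂ {v}) =
      LinearEquiv.toSpanNonzeroSingleton ℂ M v (hv h) c := by
    apply Subtype.ext
    simp [LinearEquiv.toSpanNonzeroSingleton_apply]
  rw [h1, LinearEquiv.trans_apply, LinearEquiv.trans_apply, LinearEquiv.symm_apply_apply,
    LinearEquiv.coe_ofEq_apply]
  simp

end spanIpq

/-- The index type for the direct sum `⊕_{0 ≤ p ≤ q ≤ n} I_{p,q}^{⊕ s p q}`: pairs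
`(p, q)` with `p ≤ q ≤ n` together with a copy index in `Fin (s p q)`. -/
abbrev LIdx (n : ℕ) (s : ℕ → ℕ → ℕ) : Type :=
  Σ pq : {pq : ℕ × ℕ // pq.1 ≤ pq.2 ∧ pq.2 ≤ n}, Fin (s pq.1.1 pq.1.2)

/-- The `k`-th vector space of the direct sum representation
`⊕_{0 ≤ p ≤ q ≤ n} I_{p,q}^{⊕ s p q}` of the equioriented `A_{n+1}` quiver. -/
abbrev LaceSpace (n : ℕ) (s : ℕ → ℕ → ℕ) (k : ℕ) : Type :=
  ∀ x : LIdx n s, IpqSp x.1.1.1 x.1.1.2 k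

/-- The `k`-th structure map of the direct sum representation
`⊕_{0 ≤ p ≤ q ≤ n} I_{p,q}^{⊕ s p q}`, acting componentwise. -/
noncomputable def laceMap (n : ℕ) (s : ℕ → ℕ → ℕ) (k : ℕ) :
    LaceSpace n s k →ₗ[ℂ] LaceSpace n s (k + 1) :=
  LinearMap.pi fun x => (IpqMap x.1.1.1 x.1.1.2 k).comp (LinearMap.proj x)


section psi

def incr (p q : ℕ) (s : ℕ → ℕ → ℕ) : ℕ → ℕ → ℕ :=
  fun a b => if a = p ∧ b = q then s a b + 1 else s a b

lemma le_incr (p q : ℕ) (s : ℕ → ℕ → ℕ) (a b : ℕ) : s a b ≤ incr p q s a b := by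
  unfold incr; split <;> omega

variable (n p q : ℕ) (hpq : p ≤ q) (hqn : q ≤ n) (s : ℕ → ℕ → ℕ)

def xstar : LIdx n (incr p q s) :=
  ⟨⟨(p, q), ⟨hpq, hqn⟩⟩, ⟨s p q, by simp [incr]⟩⟩

def iota (y : LIdx n s) : LIdx n (incr p q s) :=
  ⟨y.1, ⟨y.2.val, lt_of_lt_of_le y.2.isLt (le_incr p q s _ _)⟩⟩

lemma eq_xstar (x : LIdx n (incr p q s)) (h : ¬ (x.2 : ℕ) < s x.1.1.1 x.1.1.2) :
    x = xstar n p q hpq hqn s := by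
  obtain ⟨⟨⟨a, b⟩, hab⟩, j⟩ := x
  have hj : (j : ℕ) < incr p q s a b := j.isLt
  have h' : ¬ (j : ℕ) < s a b := h
  have hab' : a = p ∧ b = q := by
    by_contra hc
    have : incr p q s a b = s a b := by simp [incr, hc]
    exact h' (lt_of_lt_of_le hj (le_of_eq this))
  obtain ⟨rfl, rfl⟩ := hab'
  have hj2 : (j : ℕ) < s a b + 1 := by simpa [incr] using hj
  have hjval : (j : ℕ) = s a b := by omega
  exact Sigma.ext rfl (heq_of_eq (Fin.ext hjval))

noncomputable def Psi (k : ℕ) : LaceSpace n (incr p q s) k ≃ₗ[ℂ] (IpqSp p q k × LaceSpace n s k) where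
  toFun g := (g (xstar n p q hpq hqn s), fun y => g (iota n p q s y))
  map_add' g g' := rfl
  map_smul' c g := rfl
  invFun cf x :=
    if h : (x.2 : ℕ) < s x.1.1.1 x.1.1.2 then cf.2 ⟨x.1, ⟨x.2, h⟩⟩
    else ⟨(cf.1 : ℂ), by
      have hx := eq_xstar n p q hpq hqn s x h
      rw [hx]
      exact cf.1.2⟩
  left_inv g := by
    funext x
    dsimp only
    by_cases h : (x.2 : ℕ) < s x.1.1.1 x.1.1.2
    · refine (dif_pos h).trans ?_
      rfl
    · refine (dif_neg h).trans ?_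
      have hx := eq_xstar n p q hpq hqn s x h
      subst hx
      exact Subtype.ext rfl
  right_inv cf := by
    refine Prod.ext ?_ ?_
    · show (if h : (s p q : ℕ) < s p q then _ else _) = cf.1
      refine (dif_neg (lt_irrefl (s p q))).trans ?_
      exact Subtype.ext rfl
    · funext y
      dsimp only [iota]
      rw [dif_pos y.2.isLt]

lemma psi_comm (k : ℕ) (g : LaceSpace n (incr p q s) k) :
    Psi n p q hpq hqn s (k + 1) (laceMap n (incr p q s) k g) =
      (IpqMap p q k ((Psi n p q hpq hqn s k g).1),
        laceMap n s k ((Psi n p q hpq hqn s k g).2)) := rfl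

lemma psi_symm_comm (k : ℕ) (c : IpqSp p q k) (f : LaceSpace n s k) :
    laceMap n (incr p q s) k ((Psi n p q hpq hqn s k).symm (c, f)) =
      (Psi n p q hpq hqn s (k + 1)).symm (IpqMap p q k c, laceMap n s k f) := by
  apply (Psi n p q hpq hqn s (k + 1)).injective
  rw [LinearEquiv.apply_symm_apply, psi_comm, LinearEquiv.apply_symm_apply]

end psi


section rec
universe u
variable {V : ℕ → Type u} [∀ i, AddCommGroup (V i)] [∀ i, Module ℂ (V i)]

/-- kernels of the composite maps `V k → V q` (junk `⊤` for `k > q`). -/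
noncomputable def Nker (Φ : ∀ k, V k →ₗ[ℂ] V (k + 1)) (q : ℕ) (k : ℕ) : Submodule ℂ (V k) :=
  if h : k < q then (Nker Φ q (k + 1)).comap (Φ k) else if k = q then ⊥ else ⊤
termination_by q - k
decreasing_by omega

lemma Nker_lt {Φ : ∀ k, V k →ₗ[ℂ] V (k + 1)} {q k : ℕ} (h : k < q) :
    Nker Φ q k = (Nker Φ q (k + 1)).comap (Φ k) := by
  rw [Nker]; simp [h]

lemma Nker_self {Φ : ∀ k, V k →ₗ[ℂ] V (k + 1)} {q : ℕ} : Nker Φ q q = ⊥ := by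
  rw [Nker]; simp

/-- complements: preimages of a complement `Uq` at spot `q`. -/
noncomputable def Usub (Φ : ∀ k, V k →ₗ[ℂ] V (k + 1)) (p q : ℕ) (Uq : Submodule ℂ (V q))
    (k : ℕ) : Submodule ℂ (V k) :=
  if k < p then ⊤
  else if h : k < q then (Usub Φ p q Uq (k + 1)).comap (Φ k)
  else if h' : k = q then cast (by rw [h']) Uq
  else ⊤
termination_by q - k
decreasing_by omega

lemma Usub_lt {Φ : ∀ k, V k →ₗ[ℂ] V (k + 1)} {p q : ℕ} {Uq : Submodule ℂ (V q)} {k : ℕ}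
    (h : k < p) : Usub Φ p q Uq k = ⊤ := by
  rw [Usub]; simp [h]

lemma Usub_mid {Φ : ∀ k, V k →ₗ[ℂ] V (k + 1)} {p q : ℕ} {Uq : Submodule ℂ (V q)} {k : ℕ}
    (h1 : ¬ k < p) (h2 : k < q) : Usub Φ p q Uq k = (Usub Φ p q Uq (k + 1)).comap (Φ k) := by
  rw [Usub]; simp [h1, h2]

lemma Usub_self {Φ : ∀ k, V k →ₗ[ℂ] V (k + 1)} {p q : ℕ} {Uq : Submodule ℂ (V q)}
    (h1 : ¬ q < p) : Usub Φ p q Uq q = Uq := by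
  rw [Usub]; simp [h1]

lemma Usub_gt {Φ : ∀ k, V k →ₗ[ℂ] V (k + 1)} {p q : ℕ} {Uq : Submodule ℂ (V q)} {k : ℕ}
    (h1 : ¬ k < p) (h2 : q < k) : Usub Φ p q Uq k = ⊤ := by
  rw [Usub, if_neg h1, dif_neg (by omega : ¬ k < q), dif_neg (by omega : ¬ k = q)]

/-- the lace chain of vectors: `0` before `p`, images of `vp` afterwards. -/
noncomputable def wchain (Φ : ∀ k, V k →ₗ[ℂ] V (k + 1)) (p : ℕ) (vp : V p) : (k : ℕ) → V k
  | 0 => if h : 0 = p then cast (congrArg V h.symm) vp else 0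
  | (k + 1) => if h : k + 1 = p then cast (congrArg V h.symm) vp else Φ k (wchain Φ p vp k)

lemma wchain_self {Φ : ∀ k, V k →ₗ[ℂ] V (k + 1)} {p : ℕ} {vp : V p} :
    wchain Φ p vp p = vp := by
  cases p <;> simp [wchain]

lemma wchain_succ {Φ : ∀ k, V k →ₗ[ℂ] V (k + 1)} {p : ℕ} {vp : V p} {k : ℕ}
    (h : k + 1 ≠ p) : wchain Φ p vp (k + 1) = Φ k (wchain Φ p vp k) := by
  simp [wchain, h]

lemma wchain_lt {Φ : ∀ k, V k →ₗ[ℂ] V (k + 1)} {p : ℕ} {vp : V p} {k : ℕ}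
    (h : k < p) : wchain Φ p vp k = 0 := by
  induction k with
  | zero => simp [wchain]; omega
  | succ m ih =>
    rw [wchain_succ (by omega), ih (by omega), map_zero]

variable {Φ : ∀ k, V k →ₗ[ℂ] V (k + 1)}

lemma wchain_notmem {p q : ℕ} {vp : V p} (hvp : vp ∉ Nker Φ q p) :
    ∀ k, p ≤ k → k ≤ q → wchain Φ p vp k ∉ Nker Φ q k := by
  intro k hk
  induction k, hk using Nat.le_induction with
  | base => intro _; rw [wchain_self]; exact hvp
  | succ k hk ih =>
    intro hk1
    rw [wchain_succ (by omega)]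
    intro hmem
    exact ih (by omega) (by rw [Nker_lt (by omega)]; exact hmem)

lemma Nker_le_Usub {p q : ℕ} {Uq : Submodule ℂ (V q)} (hpq : p ≤ q) :
    ∀ d k, k + d = q → p ≤ k → Nker Φ q k ≤ Usub Φ p q Uq k := by
  intro d
  induction d with
  | zero =>
    intro k hk _
    have : k = q := by omega
    subst this
    rw [Nker_self]
    exact bot_le
  | succ d ih =>
    intro k hk hpk
    rw [Nker_lt (by omega), Usub_mid (by omega) (by omega)]
    exact Submodule.comap_mono (ih (k + 1) (by omega) (by omega))

lemma isCompl_wchain_Usub {p q : ℕ} {vp : V p} {Uq : Submodule ℂ (V q)} (hpq : p ≤ q)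
    (hvp : vp ∉ Nker Φ q p)
    (hUq : IsCompl (Submodule.span ℂ {wchain Φ p vp q}) Uq) :
    ∀ d k, k + d = q → p ≤ k →
      IsCompl (Submodule.span ℂ {wchain Φ p vp k}) (Usub Φ p q Uq k) := by
  intro d
  induction d with
  | zero =>
    intro k hk _
    have : k = q := by omega
    subst this
    rw [Usub_self (by omega)]
    exact hUq
  | succ d ih =>
    intro k hk hpk
    have hkq : k < q := by omega
    have hIH := ih (k + 1) (by omega) (by omega)
    constructor
    · rw [Submodule.disjoint_def]
      intro x hx hxU
      obtain ⟨c, rfl⟩ := Submodule.mem_span_singleton.mp hx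
      rw [Usub_mid (by omega) hkq, Submodule.mem_comap, map_smul,
        ← wchain_succ (by omega : k + 1 ≠ p)] at hxU
      by_cases hc : c = 0
      · rw [hc, zero_smul]
      · exfalso
        have hw1 : wchain Φ p vp (k + 1) ∈ Usub Φ p q Uq (k + 1) := by
          have := Submodule.smul_mem _ c⁻¹ hxU
          rwa [inv_smul_smul₀ hc] at this
        have hw0 : wchain Φ p vp (k + 1) = 0 :=
          (Submodule.disjoint_def.mp hIH.disjoint) _ (Submodule.mem_span_singleton_self _) hw1
        exact wchain_notmem hvp (k + 1) (by omega) (by omega)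
          (by rw [hw0]; exact Submodule.zero_mem _)
    · rw [codisjoint_iff, Submodule.eq_top_iff']
      intro x
      obtain ⟨y, z, hy, hz, hyz⟩ :=
        Submodule.codisjoint_iff_exists_add_eq.mp hIH.codisjoint (Φ k x)
      obtain ⟨c, rfl⟩ := Submodule.mem_span_singleton.mp hy
      apply Submodule.mem_sup.mpr
      refine ⟨c • wchain Φ p vp k, Submodule.smul_mem _ _ (Submodule.mem_span_singleton_self _),
        x - c • wchain Φ p vp k, ?_, by abel⟩
      rw [Usub_mid (by omega) hkq, Submodule.mem_comap, map_sub, map_smul,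
        ← wchain_succ (by omega : k + 1 ≠ p)]
      rw [← hyz]
      have harr : c • wchain Φ p vp (k + 1) + z - c • wchain Φ p vp (k + 1) = z := by abel
      rw [harr]
      exact hz
    
lemma Usub_mapsTo {p q : ℕ} {Uq : Submodule ℂ (V q)} (hpq : p ≤ q)
    (hmin : ∀ k, k < p → Nker Φ q k = ⊤) :
    ∀ k, ∀ x ∈ Usub Φ p q Uq k, Φ k x ∈ Usub Φ p q Uq (k + 1) := by
  intro k x hx
  rcases lt_trichotomy (k + 1) p with h | h | h
  · rw [Usub_lt h]; trivial
  · have hk : k < q := by omega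
    have hN : Nker Φ q k = ⊤ := hmin k (by omega)
    rw [Nker_lt hk] at hN
    have : Φ k x ∈ Nker Φ q (k + 1) := by
      have : x ∈ (Nker Φ q (k + 1)).comap (Φ k) := by rw [hN]; trivial
      exact this
    exact Nker_le_Usub hpq (q - (k + 1)) (k + 1) (by omega) (by omega) this
  · by_cases hk : k < q
    · rw [Usub_mid (by omega) hk] at hx
      exact hx
    · rw [Usub_gt (by omega) (by omega)]; trivial

end rec


section combine
universe u
variable {V : ℕ → Type u} [∀ i, AddCommGroup (V i)] [∀ i, Module ℂ (V i)]
variable (n p q : ℕ) (hpq : p ≤ q) (hqn : q ≤ n)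
variable (w : ∀ k, V k) (U : ∀ k, Submodule ℂ (V k)) (s : ℕ → ℕ → ℕ)

noncomputable def combineEquiv
    (hc : ∀ k, k ≤ n → IsCompl (Submodule.span ℂ {w k}) (U k))
    (hwne : ∀ k, p ≤ k ∧ k ≤ q → w k ≠ 0)
    (hw0 : ∀ k, k ≤ n → ¬(p ≤ k ∧ k ≤ q) → w k = 0)
    (e' : ∀ k : Fin (n + 1), ↥(U k) ≃ₗ[ℂ] LaceSpace n s k)
    (k : Fin (n + 1)) : V k ≃ₗ[ℂ] LaceSpace n (incr p q s) k :=
  ((Submodule.prodEquivOfIsCompl _ _ (hc k (Nat.lt_succ_iff.mp k.isLt))).symm.trans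
    ((spanIpq p q k (w k) (hwne k) (hw0 k (Nat.lt_succ_iff.mp k.isLt))).prodCongr (e' k))).trans
    (Psi n p q hpq hqn s k).symm

variable (hc : ∀ k, k ≤ n → IsCompl (Submodule.span ℂ {w k}) (U k))
    (hwne : ∀ k, p ≤ k ∧ k ≤ q → w k ≠ 0)
    (hw0 : ∀ k, k ≤ n → ¬(p ≤ k ∧ k ≤ q) → w k = 0)
    (e' : ∀ k : Fin (n + 1), ↥(U k) ≃ₗ[ℂ] LaceSpace n s k)

lemma combineEquiv_right (k : Fin (n + 1)) (b : ↥(U k)) :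
    combineEquiv n p q hpq hqn w U s hc hwne hw0 e' k ↑b =
      (Psi n p q hpq hqn s k).symm (0, e' k b) := by
  unfold combineEquiv
  rw [LinearEquiv.trans_apply, LinearEquiv.trans_apply,
    Submodule.prodEquivOfIsCompl_symm_apply_right, LinearEquiv.prodCongr_apply, map_zero]

lemma combineEquiv_left (k : Fin (n + 1)) (c : ℂ)
    (hm : c • w ↑k ∈ Submodule.span ℂ {w ↑k}) :
    combineEquiv n p q hpq hqn w U s hc hwne hw0 e' k (c • w ↑k) =
      (Psi n p q hpq hqn s k).symm
        (spanIpq p q k (w k) (hwne k) (hw0 k (Nat.lt_succ_iff.mp k.isLt)) ⟨c • w ↑k, hm⟩,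
          0) := by
  unfold combineEquiv
  rw [LinearEquiv.trans_apply, LinearEquiv.trans_apply]
  have h2 : ((Submodule.span ℂ {w ↑k}).prodEquivOfIsCompl (U ↑k)
      (hc k (Nat.lt_succ_iff.mp k.isLt))).symm (c • w ↑k) = (⟨c • w ↑k, hm⟩, 0) :=
    Submodule.prodEquivOfIsCompl_symm_apply_left _ _ _ ⟨c • w ↑k, hm⟩
  rw [h2, LinearEquiv.prodCongr_apply, map_zero]

theorem combine (Φ : ∀ k, V k →ₗ[ℂ] V (k + 1))
    (hU : ∀ k, ∀ x ∈ U k, Φ k x ∈ U (k + 1))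
    (hwsucc : ∀ k, p ≤ k → Φ k (w k) = w (k + 1))
    (hcomm' : ∀ i : Fin n, (laceMap n s (i : ℕ)).comp (e' i.castSucc).toLinearMap =
      (e' i.succ).toLinearMap.comp ((Φ i).restrict (hU i)))
    (i : Fin n) :
    (laceMap n (incr p q s) (i : ℕ)).comp
        ((combineEquiv n p q hpq hqn w U s hc hwne hw0 e' i.castSucc).toLinearMap) =
      (combineEquiv n p q hpq hqn w U s hc hwne hw0 e' i.succ).toLinearMap.comp (Φ i) := by
  apply LinearMap.ext
  intro x
  obtain ⟨y, z, hy, hz, hyz⟩ :=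
    Submodule.codisjoint_iff_exists_add_eq.mp
      ((hc i (by omega : (i:ℕ) ≤ n)).codisjoint) x
  simp only [LinearMap.coe_comp, Function.comp_apply, LinearEquiv.coe_coe]
  rw [← hyz]
  simp only [map_add]
  have hzpart : laceMap n (incr p q s) (i : ℕ)
      (combineEquiv n p q hpq hqn w U s hc hwne hw0 e' i.castSucc z) =
      combineEquiv n p q hpq hqn w U s hc hwne hw0 e' i.succ (Φ (i : ℕ) z) := by
    have h1 : combineEquiv n p q hpq hqn w U s hc hwne hw0 e' i.castSucc z =
        (Psi n p q hpq hqn s (i : ℕ)).symm (0, e' i.castSucc ⟨z, hz⟩) :=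
      combineEquiv_right n p q hpq hqn w U s hc hwne hw0 e' i.castSucc ⟨z, hz⟩
    have h2 : combineEquiv n p q hpq hqn w U s hc hwne hw0 e' i.succ (Φ (i : ℕ) z) =
        (Psi n p q hpq hqn s ((i : ℕ) + 1)).symm
          (0, e' i.succ (((Φ (i : ℕ)).restrict (hU (i : ℕ))) ⟨z, hz⟩)) :=
      combineEquiv_right n p q hpq hqn w U s hc hwne hw0 e' i.succ
        (((Φ (i : ℕ)).restrict (hU (i : ℕ))) ⟨z, hz⟩)
    have h3 : laceMap n s (i : ℕ) ((e' i.castSucc) ⟨z, hz⟩) =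
        (e' i.succ) (((Φ (i : ℕ)).restrict (hU (i : ℕ))) ⟨z, hz⟩) := by
      have := LinearMap.congr_fun (hcomm' i) ⟨z, hz⟩
      simpa using this
    rw [h1, psi_symm_comm, map_zero, h2, h3]
  have hypart : laceMap n (incr p q s) (i : ℕ)
      (combineEquiv n p q hpq hqn w U s hc hwne hw0 e' i.castSucc y) =
      combineEquiv n p q hpq hqn w U s hc hwne hw0 e' i.succ (Φ (i : ℕ) y) := by
    obtain ⟨c, rfl⟩ := Submodule.mem_span_singleton.mp hy
    by_cases hin : p ≤ (i : ℕ) ∧ (i : ℕ) ≤ q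
    · have hm : c • w (i : ℕ) ∈ Submodule.span ℂ {w (i : ℕ)} :=
        Submodule.smul_mem _ _ (Submodule.mem_span_singleton_self _)
      have h1 : combineEquiv n p q hpq hqn w U s hc hwne hw0 e' i.castSucc (c • w (i : ℕ)) =
          (Psi n p q hpq hqn s (i : ℕ)).symm
            (spanIpq p q (i : ℕ) (w (i : ℕ)) (hwne (i : ℕ))
              (hw0 (i : ℕ) (Nat.lt_succ_iff.mp i.castSucc.isLt)) ⟨c • w (i : ℕ), hm⟩, 0) :=
        combineEquiv_left n p q hpq hqn w U s hc hwne hw0 e' i.castSucc c hm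
      have hΦy : Φ (i : ℕ) (c • w (i : ℕ)) = c • w ((i : ℕ) + 1) := by
        rw [map_smul, hwsucc _ hin.1]
      rw [h1, psi_symm_comm, map_zero, hΦy]
      by_cases hiq : (i : ℕ) < q
      · have hin' : p ≤ (i : ℕ) + 1 ∧ (i : ℕ) + 1 ≤ q := ⟨by omega, by omega⟩
        have hm' : c • w ((i : ℕ) + 1) ∈ Submodule.span ℂ {w ((i : ℕ) + 1)} :=
          Submodule.smul_mem _ _ (Submodule.mem_span_singleton_self _)
        have h2 : combineEquiv n p q hpq hqn w U s hc hwne hw0 e' i.succ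
              (c • w ((i : ℕ) + 1)) =
            (Psi n p q hpq hqn s ((i : ℕ) + 1)).symm
              (spanIpq p q ((i : ℕ) + 1) (w ((i : ℕ) + 1)) (hwne ((i : ℕ) + 1))
                (hw0 ((i : ℕ) + 1) (Nat.lt_succ_iff.mp i.succ.isLt))
                ⟨c • w ((i : ℕ) + 1), hm'⟩, 0) :=
          combineEquiv_left n p q hpq hqn w U s hc hwne hw0 e' i.succ c hm'
        rw [h2]
        congr 2
        apply Subtype.ext
        rw [IpqMap_val hin', spanIpq_val hin, spanIpq_val hin']
      · have hw1 : w ((i : ℕ) + 1) = 0 :=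
          hw0 ((i : ℕ) + 1) (by omega) (by omega)
        rw [hw1, smul_zero, map_zero, IpqMap_zero' (by omega)]
        exact map_zero _
    · have hwi : w (i : ℕ) = 0 := hw0 (i : ℕ) (by omega) hin
      rw [hwi, smul_zero, map_zero, map_zero, map_zero, map_zero]
  exact congrArg₂ (· + ·) hypart hzpart
end combine

section main
universe u

theorem aux : ∀ (D n : ℕ) (V : ℕ → Type u) [∀ i, AddCommGroup (V i)] [∀ i, Module ℂ (V i)]
    [∀ i, FiniteDimensional ℂ (V i)] (Φ : ∀ k, V k →ₗ[ℂ] V (k + 1)),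
    (∑ k ∈ Finset.range (n + 1), Module.finrank ℂ (V k)) = D →
    ∃ s : ℕ → ℕ → ℕ, ∃ e : ∀ k : Fin (n + 1), V (k : ℕ) ≃ₗ[ℂ] LaceSpace n s (k : ℕ),
      ∀ i : Fin n, (laceMap n s (i : ℕ)).comp (e i.castSucc).toLinearMap =
        (e i.succ).toLinearMap.comp (Φ (i : ℕ)) := by
  intro D
  induction D using Nat.strong_induction_on with
  | _ D IH =>
  intro n V _ _ _ Φ hD
  classical
  by_cases htriv : ∀ k, k ≤ n → Module.finrank ℂ (V k) = 0
  · haveI hsub : ∀ k : Fin (n + 1), Subsingleton (V (k : ℕ)) := fun k =>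
      Module.finrank_zero_iff.mp (htriv k (by omega))
    haveI hEmpty : IsEmpty (LIdx n (fun _ _ => 0)) := ⟨fun x => x.2.elim0⟩
    refine ⟨fun _ _ => 0, fun k => @trivLEquiv (V (k : ℕ)) _ _ _ _ _ (hsub k) inferInstance,
      fun i => ?_⟩
    apply LinearMap.ext
    intro x
    exact Subsingleton.elim _ _
  · push_neg at htriv
    obtain ⟨k₀, hk₀n, hk₀⟩ := htriv
    set P₁ := fun k => Module.finrank ℂ (V k) ≠ 0 with hP₁
    set q := Nat.findGreatest P₁ n with hqdef
    have hq : P₁ q := Nat.findGreatest_spec hk₀n hk₀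
    have hqn : q ≤ n := Nat.findGreatest_le n
    have hgt : ∀ k, q < k → k ≤ n → Module.finrank ℂ (V k) = 0 := by
      intro k h1 h2
      by_contra hne
      exact Nat.findGreatest_is_greatest h1 h2 hne
    haveI : Nontrivial (V q) := Module.finrank_pos_iff.mp (Nat.pos_of_ne_zero hq)
    have hexP : ∃ k, Nker Φ q k ≠ ⊤ := ⟨q, by rw [Nker_self]; exact bot_ne_top⟩
    set p := Nat.find hexP with hpdef
    have hpq : p ≤ q := Nat.find_min' hexP (by rw [Nker_self]; exact bot_ne_top)
    have hpP : Nker Φ q p ≠ ⊤ := Nat.find_spec hexP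
    have hmin : ∀ k, k < p → Nker Φ q k = ⊤ := by
      intro k hk
      by_contra hne
      exact Nat.find_min hexP hk hne
    obtain ⟨vp, hvp⟩ : ∃ v, v ∉ Nker Φ q p := by
      by_contra h
      push_neg at h
      exact hpP (Submodule.eq_top_iff'.mpr h)
    set w := wchain Φ p vp with hwdef
    have hwne : ∀ k, p ≤ k ∧ k ≤ q → w k ≠ 0 := by
      intro k hk h0
      exact wchain_notmem hvp k hk.1 hk.2 (by rw [hwdef] at h0; rw [h0]; exact Submodule.zero_mem _)
    have hwq_ne : w q ≠ 0 := hwne q ⟨hpq, le_rfl⟩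
    obtain ⟨Uq, hUq⟩ := Submodule.exists_isCompl (Submodule.span ℂ {w q})
    set U := Usub Φ p q Uq with hUdef
    have hw0 : ∀ k, k ≤ n → ¬(p ≤ k ∧ k ≤ q) → w k = 0 := by
      intro k hkn hk
      by_cases h1 : k < p
      · exact wchain_lt h1
      · haveI : Subsingleton (V k) := Module.finrank_zero_iff.mp (hgt k (by omega) hkn)
        exact Subsingleton.elim _ _
    have hcN : ∀ k, k ≤ n → IsCompl (Submodule.span ℂ {w k}) (U k) := by
      intro k hkn
      by_cases h1 : p ≤ k ∧ k ≤ q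
      · exact isCompl_wchain_Usub hpq hvp hUq (q - k) k (by omega) h1.1
      · rw [hw0 k hkn h1, Submodule.span_zero_singleton, hUdef]
        by_cases h2 : k < p
        · rw [Usub_lt h2]; exact isCompl_bot_top
        · rw [Usub_gt h2 (by omega)]; exact isCompl_bot_top
    have hUmaps : ∀ k, ∀ x ∈ U k, Φ k x ∈ U (k + 1) := Usub_mapsTo hpq hmin
    have hwsucc : ∀ k, p ≤ k → Φ k (w k) = w (k + 1) := by
      intro k hk
      exact (wchain_succ (by omega)).symm
    have hsum : (∑ k ∈ Finset.range (n + 1), Module.finrank ℂ (↥(U k))) < D := by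
      rw [← hD]
      apply Finset.sum_lt_sum
      · intro k _
        exact Submodule.finrank_le _
      · refine ⟨q, Finset.mem_range.mpr (by omega), ?_⟩
        have h1 := Submodule.finrank_add_eq_of_isCompl (hcN q hqn)
        have h2 : Module.finrank ℂ ↥(Submodule.span ℂ {w q}) = 1 :=
          finrank_span_singleton hwq_ne
        omega
    obtain ⟨s, e', hcomm'⟩ := IH _ hsum n (fun k => ↥(U k))
      (fun k => (Φ k).restrict (hUmaps k)) rfl
    exact ⟨incr p q s, combineEquiv n p q hpq hqn w U s hcN hwne hw0 e',
      combine n p q hpq hqn w U s hcN hwne hw0 e' Φ hUmaps hwsucc hcomm'⟩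

end main

/-- every representation of the equioriented `A_{n+1}` quiver on
finite-dimensional complex vector spaces `V 0, …, V n` is isomorphic to a direct sum
`⊕_{0 ≤ p ≤ q ≤ n} I_{p,q}^{⊕ s p q}` for some array `s` of natural numbers. -/
theorem rep_iso_directSum_Ipq (n : ℕ) (V : ℕ → Type*) [∀ i, AddCommGroup (V i)]
    [∀ i, Module ℂ (V i)] [∀ i, FiniteDimensional ℂ (V i)] (φ : HomSp n V) :
    ∃ s : ℕ → ℕ → ℕ, ∃ e : ∀ k : Fin (n + 1), V (k : ℕ) ≃ₗ[ℂ] LaceSpace n s (k : ℕ),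
      ∀ i : Fin n,
        (laceMap n s (i : ℕ)).comp (e i.castSucc).toLinearMap =
          (e i.succ).toLinearMap.comp (φ i) := by
  classical
  set Φt : ∀ k, V k →ₗ[ℂ] V (k + 1) := fun k => if h : k < n then φ ⟨k, h⟩ else 0 with hΦt
  obtain ⟨s, e, hcomm⟩ := aux (∑ k ∈ Finset.range (n + 1), Module.finrank ℂ (V k)) n V Φt rfl
  refine ⟨s, e, fun i => ?_⟩
  have h := hcomm i
  have hΦ : Φt (i : ℕ) = φ i := by
    rw [hΦt]
    simp only [i.isLt, dif_pos, Fin.eta]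
  rwa [hΦ] at h
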